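/- For every pivot (v, i) ∈ [1,m] × [1,n], the following recurrence holds: L(v,i) = -∞ if mfi(v,i) = [-∞,∞]; L(v,i) = i if mfi(v,i) ≠ [-∞,∞] and v has no left child in CT(P); and otherwise (mfi(v,i) ≠ [-∞,∞] and v.L ≠ nil) L(v,i) = max{ L(v.L, j) : 1 ≤ j ≤ i-1, T[i] < T[j], R(v.L, j) < i }. -/

import Mathlib

/-- Ordered binary trees (possibly empty). -/
inductive BTree : Type
  | nil : BTree
  | node : BTree → BTree → BTree
  deriving DecidableEq

/-- The minimum value of a list of integers (with default `0` for the empty list). -/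
noncomputable def minval (l : List ℤ) : ℤ := l.minimum.untopD 0

/-- The 0-based index of the leftmost occurrence of the minimum value. -/
noncomputable def minidx0 (l : List ℤ) : ℕ := l.idxOf (minval l)

theorem minidx0_lt_length {l : List ℤ} (h : l ≠ []) : minidx0 l < l.length := by
  obtain ⟨a, ha⟩ := WithTop.ne_top_iff_exists.mp (List.minimum_ne_top_of_ne_nil h)
  have hmem : a ∈ l := List.minimum_mem ha.symm
  have hval : minval l = a := by simp [minval, ← ha]
  rw [minidx0, hval]
  exact List.idxOf_lt_length_iff.mpr hmem

/-- The Cartesian tree of a string of integers. -/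
noncomputable def CT (l : List ℤ) : BTree :=
  if h : l = [] then .nil
  else .node (CT (l.take (minidx0 l))) (CT (l.drop (minidx0 l + 1)))
termination_by l.length
decreasing_by
  · have := minidx0_lt_length h
    simp [List.length_take]
    omega
  · have : 0 < l.length := List.length_pos_iff.mpr h
    simp [List.length_drop]
    omega

/-- The value of the 1-based position `i` of the string `T` (default `0`). -/
def val (T : List ℤ) (i : ℕ) : ℤ := T.getD (i - 1) 0

/-- `IsSubSeq n m I` : `I` is a strictly increasing sequence of `m` subscripts in `[1, n]`. -/
def IsSubSeq (n m : ℕ) (I : List ℕ) : Prop :=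
  I.length = m ∧ I.Pairwise (· < ·) ∧ ∀ j ∈ I, 1 ≤ j ∧ j ≤ n

/-- The subsequence `T_I` of `T` selected by the (1-based) subscript sequence `I`. -/
def seqAt (T : List ℤ) (I : List ℕ) : List ℤ := I.map (val T)

/-- The substring `P[a..b]` of `P` (1-based, inclusive). -/
def subslice (P : List ℤ) (a b : ℕ) : List ℤ := (P.take b).drop (a - 1)

/-- The left end of the maximal interval around position `v` in which `P[v]` is minimal:
one plus the rightmost position `j < v` carrying a value smaller than `P[v]` (or `1`). -/
def leftEnd (P : List ℤ) (v : ℕ) : ℕ :=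
  (((Finset.Icc 1 (v - 1)).filter (fun j => val P j < val P v)).max.unbotD 0) + 1

/-- The right end of the maximal interval around position `v` in which `P[v]` is minimal:
the leftmost position `j > v` carrying a value smaller than `P[v]`, minus one (or `|P|`). -/
def rightEnd (P : List ℤ) (v : ℕ) : ℕ :=
  (((Finset.Icc (v + 1) P.length).filter (fun j => val P j < val P v)).min.untopD
    (P.length + 1)) - 1

/-- `P_v`: the substring of `P` spanned by the subtree of `CT(P)` rooted at node `v`
(nodes are identified with 1-based positions of `P`). -/
def Psub (P : List ℤ) (v : ℕ) : List ℤ := subslice P (leftEnd P v) (rightEnd P v)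

/-- The left child `v.L` of node `v` in `CT(P)` (as a 1-based position), if it exists. -/
noncomputable def leftChild (P : List ℤ) (v : ℕ) : Option ℕ :=
  if leftEnd P v < v then some (leftEnd P v + minidx0 (subslice P (leftEnd P v) (v - 1)))
  else none

/-- The right child `v.R` of node `v` in `CT(P)` (as a 1-based position), if it exists. -/
noncomputable def rightChild (P : List ℤ) (v : ℕ) : Option ℕ :=
  if v < rightEnd P v then some (v + 1 + minidx0 (subslice P (v + 1) (rightEnd P v)))
  else none

/-- `[ℓ, r]` is a fixed-interval with pivot `(v, i)`. -/
def IsFixedInterval (T P : List ℤ) (v i ℓ r : ℕ) : Prop :=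
  1 ≤ ℓ ∧ r ≤ T.length ∧
    ∃ I : List ℕ, IsSubSeq T.length (Psub P v).length I ∧ i ∈ I ∧
      (∀ j ∈ I, ℓ ≤ j ∧ j ≤ r) ∧ CT (seqAt T I) = CT (Psub P v) ∧
      val T i = minval (seqAt T I)

/-- `IntervalSsubset (ℓ', r') (ℓ, r)` : the interval `[ℓ', r']` is strictly contained
in the interval `[ℓ, r]`. -/
def IntervalSsubset (p q : ℕ × ℕ) : Prop := q.1 ≤ p.1 ∧ p.2 ≤ q.2 ∧ p ≠ q

/-- `[ℓ, r]` is a minimal fixed-interval with pivot `(v, i)`. -/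
def IsMinFixedInterval (T P : List ℤ) (v i ℓ r : ℕ) : Prop :=
  IsFixedInterval T P v i ℓ r ∧
    ¬∃ ℓ' r', IsFixedInterval T P v i ℓ' r' ∧ IntervalSsubset (ℓ', r') (ℓ, r)

open Classical in
/-- The left endpoint `L(v, i)` of the minimal fixed-interval `mfi(v, i)`,
which is `-∞` (i.e. `⊥`) if no (minimal) fixed-interval with pivot `(v, i)` exists. -/
noncomputable def mfiL (T P : List ℤ) (v i : ℕ) : WithBot ℕ :=
  if h : ∃ ℓ r, IsMinFixedInterval T P v i ℓ r then (h.choose : WithBot ℕ) else ⊥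

open Classical in
/-- The right endpoint `R(v, i)` of the minimal fixed-interval `mfi(v, i)`,
which is `∞` (i.e. `⊤`) if no (minimal) fixed-interval with pivot `(v, i)` exists. -/
noncomputable def mfiR (T P : List ℤ) (v i : ℕ) : WithTop ℕ :=
  if h : ∃ ℓ r, IsMinFixedInterval T P v i ℓ r then (h.choose_spec.choose : WithTop ℕ) else ⊤

/-- `I` is a trace of pattern `P` in text `T`. -/
def IsTrace (T P : List ℤ) (I : List ℕ) : Prop :=
  IsSubSeq T.length P.length I ∧ CT (seqAt T I) = CT P

/-- `[ℓ, r]` is an occurrence interval for `P` over `T`. -/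
def IsOccInterval (T P : List ℤ) (ℓ r : ℕ) : Prop :=
  1 ≤ ℓ ∧ r ≤ T.length ∧ ∃ I, IsTrace T P I ∧ ∀ j ∈ I, ℓ ≤ j ∧ j ≤ r

/-- `[ℓ, r]` is a minimal occurrence interval for `P` over `T`. -/
def IsMinOccInterval (T P : List ℤ) (ℓ r : ℕ) : Prop :=
  IsOccInterval T P ℓ r ∧
    ¬∃ ℓ' r', IsOccInterval T P ℓ' r' ∧ IntervalSsubset (ℓ', r') (ℓ, r)


/-- Number of nodes of a binary tree. -/
def BTree.size : BTree → ℕ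
  | .nil => 0
  | .node l r => l.size + r.size + 1

lemma CT_nil : CT [] = .nil := by rw [CT]; simp

lemma CT_cons (l : List ℤ) (h : l ≠ []) :
    CT l = .node (CT (l.take (minidx0 l))) (CT (l.drop (minidx0 l + 1))) := by
  rw [CT]; simp [h]

lemma size_CT_aux : ∀ (n : ℕ) (l : List ℤ), l.length ≤ n → (CT l).size = l.length := by
  intro n
  induction n with
  | zero =>
    intro l hl
    have : l = [] := List.eq_nil_of_length_eq_zero (Nat.le_zero.mp hl)
    subst this; simp [CT_nil, BTree.size]
  | succ n ih =>
    intro l hl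
    by_cases h : l = []
    · subst h; simp [CT_nil, BTree.size]
    · rw [CT_cons l h]
      have hlt := minidx0_lt_length h
      have h1 : (l.take (minidx0 l)).length ≤ n := by
        simp [List.length_take]; omega
      have h2 : (l.drop (minidx0 l + 1)).length ≤ n := by
        simp [List.length_drop]; omega
      simp [BTree.size, ih _ h1, ih _ h2, List.length_take, List.length_drop]
      omega

lemma size_CT (l : List ℤ) : (CT l).size = l.length := size_CT_aux l.length l le_rfl

lemma length_eq_of_CT_eq {l₁ l₂ : List ℤ} (h : CT l₁ = CT l₂) : l₁.length = l₂.length := by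
  rw [← size_CT, ← size_CT, h]

lemma minval_mem {l : List ℤ} (h : l ≠ []) : minval l ∈ l := by
  obtain ⟨a, ha⟩ := WithTop.ne_top_iff_exists.mp (List.minimum_ne_top_of_ne_nil h)
  have : minval l = a := by simp [minval, ← ha]
  rw [this]; exact List.minimum_mem ha.symm

lemma minval_le {l : List ℤ} {x : ℤ} (hx : x ∈ l) : minval l ≤ x := by
  have h : l ≠ [] := List.ne_nil_of_mem hx
  obtain ⟨a, ha⟩ := WithTop.ne_top_iff_exists.mp (List.minimum_ne_top_of_ne_nil h)
  have : minval l = a := by simp [minval, ← ha]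
  rw [this]
  exact List.minimum_le_of_mem hx ha.symm

/-- If `x ∈ l` is `≤` all elements, then `minval l = x`. -/
lemma minval_eq_of_le {l : List ℤ} {x : ℤ} (hx : x ∈ l) (h : ∀ y ∈ l, x ≤ y) :
    minval l = x :=
  le_antisymm (minval_le hx) (h _ (minval_mem (List.ne_nil_of_mem hx)))

/-- Composition: if `x` is strictly below everything in `l₁` and `l₂`, then the Cartesian
tree of `l₁ ++ x :: l₂` is built from those of `l₁` and `l₂`. -/
lemma minidx0_append {l₁ l₂ : List ℤ} {x : ℤ}
    (h1 : ∀ y ∈ l₁, x < y) (h2 : ∀ y ∈ l₂, x < y) :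
    minidx0 (l₁ ++ x :: l₂) = l₁.length := by
  have hmem : x ∈ l₁ ++ x :: l₂ := by simp
  have hmv : minval (l₁ ++ x :: l₂) = x := by
    apply minval_eq_of_le hmem
    intro y hy
    rcases List.mem_append.mp hy with hy | hy
    · exact (h1 y hy).le
    · rcases List.mem_cons.mp hy with rfl | hy
      · exact le_rfl
      · exact (h2 y hy).le
  rw [minidx0, hmv]
  rw [List.idxOf_append_of_notMem (fun hx => lt_irrefl x (h1 x hx))]
  simp

lemma CT_append {l₁ l₂ : List ℤ} {x : ℤ}
    (h1 : ∀ y ∈ l₁, x < y) (h2 : ∀ y ∈ l₂, x < y) :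
    CT (l₁ ++ x :: l₂) = .node (CT l₁) (CT l₂) := by
  rw [CT_cons _ (by simp), minidx0_append h1 h2]
  congr 1
  · congr 1
    simp [List.take_append]
  · congr 1
    rw [List.drop_append]
    simp
lemma val_eq_getElem {P : List ℤ} {j : ℕ} (h1 : 1 ≤ j) (h2 : j ≤ P.length) :
    val P j = P[j - 1]'(by omega) := by
  rw [val, List.getD_eq_getElem?_getD, List.getElem?_eq_getElem (by omega)]
  rfl

lemma val_inj {P : List ℤ} (hP : P.Nodup) {j₁ j₂ : ℕ}
    (h₁ : 1 ≤ j₁ ∧ j₁ ≤ P.length) (h₂ : 1 ≤ j₂ ∧ j₂ ≤ P.length)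
    (h : val P j₁ = val P j₂) : j₁ = j₂ := by
  rw [val_eq_getElem h₁.1 h₁.2, val_eq_getElem h₂.1 h₂.2] at h
  have := (List.Nodup.getElem_inj_iff hP).mp h
  omega

lemma minidx0_eq {l : List ℤ} (hl : l.Nodup) {k : ℕ} (hk : k < l.length)
    (h : l[k] = minval l) : minidx0 l = k := by
  rw [minidx0, ← h, List.Nodup.idxOf_getElem hl]

lemma subslice_eq_map (P : List ℤ) (a b : ℕ) (ha : 1 ≤ a) :
    subslice P a b = (List.range' a (min b P.length + 1 - a)).map (val P) := by
  apply List.ext_getElem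
  · simp [subslice, List.length_drop, List.length_take]
    omega
  · intro k h1 h2
    have hlen : (subslice P a b).length = min b P.length + 1 - a := by
      simp [subslice, List.length_drop, List.length_take]; omega
    rw [hlen] at h1
    simp only [subslice, List.getElem_drop, List.getElem_take, List.getElem_map,
      List.getElem_range']
    rw [val_eq_getElem (by omega) (by omega)]
    congr 1
    omega

lemma length_subslice (P : List ℤ) (a b : ℕ) (ha : 1 ≤ a) (hb : b ≤ P.length) :
    (subslice P a b).length = b + 1 - a := by
  simp [subslice, List.length_drop, List.length_take]; omega

lemma mem_subslice {P : List ℤ} {a b : ℕ} (ha : 1 ≤ a) (hb : b ≤ P.length) {x : ℤ} :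
    x ∈ subslice P a b ↔ ∃ j, a ≤ j ∧ j ≤ b ∧ val P j = x := by
  rw [subslice_eq_map P a b ha]
  simp only [List.mem_map, List.mem_range']
  constructor
  · rintro ⟨j, ⟨c, hc, rfl⟩, rfl⟩; exact ⟨a + 1 * c, by omega, by omega, rfl⟩
  · rintro ⟨j, hj1, hj2, rfl⟩; exact ⟨j, ⟨j - a, by omega, by omega⟩, rfl⟩

lemma subslice_getElem {P : List ℤ} {a b k : ℕ} (ha : 1 ≤ a) (hb : b ≤ P.length)
    (hk : k < b + 1 - a) :
    (subslice P a b)[k]'(by rw [length_subslice P a b ha hb]; omega) = val P (a + k) := by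
  rw [List.getElem_of_eq (subslice_eq_map P a b ha)]
  have h : min b P.length = b := by omega
  rw [List.getElem_map, List.getElem_range']
  congr 1
  omega
section Ends
variable {P : List ℤ} {v : ℕ}

lemma unbot'_some (d m : ℕ) : WithBot.unbotD d (some m) = m := rfl
lemma unbot'_none (d : ℕ) : WithBot.unbotD d none = d := rfl
lemma untop'_some (d m : ℕ) : WithTop.untopD d (some m) = m := rfl
lemma untop'_none (d : ℕ) : WithTop.untopD d none = d := rfl
lemma coe_le_some {j m : ℕ} (h : (j : WithBot ℕ) ≤ (m : WithBot ℕ)) : j ≤ m := by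
  exact_mod_cast h
lemma some_le_coe {j m : ℕ} (h : (m : WithTop ℕ) ≤ (j : WithTop ℕ)) : m ≤ j := by
  exact_mod_cast h

lemma leftEnd_pos : 1 ≤ leftEnd P v := by simp [leftEnd]

lemma leftEnd_le (hv : 1 ≤ v) : leftEnd P v ≤ v := by
  rw [leftEnd]
  rcases h : ((Finset.Icc 1 (v - 1)).filter (fun j => val P j < val P v)).max with _ | m
  · rw [unbot'_none]; omega
  · have hm := Finset.mem_of_max h
    simp only [Finset.mem_filter, Finset.mem_Icc] at hm
    rw [unbot'_some]
    omega

/-- No position in `[leftEnd, v-1]` has value below `val P v`. -/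
lemma leftEnd_min {j : ℕ} (h1 : leftEnd P v ≤ j) (h2 : j ≤ v - 1) :
    ¬ val P j < val P v := by
  intro hlt
  have hj : j ∈ (Finset.Icc 1 (v - 1)).filter (fun j => val P j < val P v) := by
    simp only [Finset.mem_filter, Finset.mem_Icc]
    exact ⟨⟨le_trans leftEnd_pos h1, h2⟩, hlt⟩
  have hle := Finset.le_max hj
  rcases h : ((Finset.Icc 1 (v - 1)).filter (fun j => val P j < val P v)).max with _ | m
  · rw [h] at hle; exact absurd hle (WithBot.not_coe_le_bot j)
  · rw [h] at hle
    have hjm : j ≤ m := coe_le_some hle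
    have : leftEnd P v = m + 1 := by rw [leftEnd, h, unbot'_some]
    omega

/-- The boundary property of `leftEnd`. -/
lemma leftEnd_boundary :
    leftEnd P v = 1 ∨
      (2 ≤ leftEnd P v ∧ leftEnd P v - 1 ≤ v - 1 ∧ val P (leftEnd P v - 1) < val P v) := by
  rcases h : ((Finset.Icc 1 (v - 1)).filter (fun j => val P j < val P v)).max with _ | m
  · left; rw [leftEnd, h, unbot'_none]
  · right
    have hm := Finset.mem_of_max h
    simp only [Finset.mem_filter, Finset.mem_Icc] at hm
    have : leftEnd P v = m + 1 := by rw [leftEnd, h, unbot'_some]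
    refine ⟨by omega, by omega, ?_⟩
    rw [this]
    simpa using hm.2

lemma rightEnd_le : rightEnd P v ≤ P.length := by
  rw [rightEnd]
  rcases h : ((Finset.Icc (v + 1) P.length).filter (fun j => val P j < val P v)).min with _ | m
  · rw [untop'_none]; omega
  · have hm := Finset.mem_of_min h
    simp only [Finset.mem_filter, Finset.mem_Icc] at hm
    rw [untop'_some]
    omega

lemma le_rightEnd (hv : v ≤ P.length) : v ≤ rightEnd P v := by
  rw [rightEnd]
  rcases h : ((Finset.Icc (v + 1) P.length).filter (fun j => val P j < val P v)).min with _ | m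
  · rw [untop'_none]; omega
  · have hm := Finset.mem_of_min h
    simp only [Finset.mem_filter, Finset.mem_Icc] at hm
    rw [untop'_some]
    omega

/-- No position in `[v+1, rightEnd]` has value below `val P v`. -/
lemma rightEnd_min {j : ℕ} (h1 : v + 1 ≤ j) (h2 : j ≤ rightEnd P v) :
    ¬ val P j < val P v := by
  intro hlt
  have hjle : j ≤ P.length := le_trans h2 rightEnd_le
  have hj : j ∈ (Finset.Icc (v + 1) P.length).filter (fun j => val P j < val P v) := by
    simp only [Finset.mem_filter, Finset.mem_Icc]
    exact ⟨⟨h1, hjle⟩, hlt⟩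
  have hle := Finset.min_le hj
  rcases h : ((Finset.Icc (v + 1) P.length).filter (fun j => val P j < val P v)).min with _ | m
  · rw [h] at hle
    have : (⊤ : WithTop ℕ) ≤ (j : WithTop ℕ) := hle
    simp at this
  · rw [h] at hle
    have hmj : m ≤ j := some_le_coe hle
    have hm := Finset.mem_of_min h
    simp only [Finset.mem_filter, Finset.mem_Icc] at hm
    have : rightEnd P v = m - 1 := by rw [rightEnd, h, untop'_some]
    omega

/-- The boundary property of `rightEnd`. -/
lemma rightEnd_boundary :
    rightEnd P v = P.length ∨
      (rightEnd P v + 1 ≤ P.length ∧ v + 1 ≤ rightEnd P v + 1 ∧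
        val P (rightEnd P v + 1) < val P v) := by
  rcases h : ((Finset.Icc (v + 1) P.length).filter (fun j => val P j < val P v)).min with _ | m
  · left; rw [rightEnd, h, untop'_none]; omega
  · right
    have hm := Finset.mem_of_min h
    simp only [Finset.mem_filter, Finset.mem_Icc] at hm
    have he : rightEnd P v = m - 1 := by rw [rightEnd, h, untop'_some]
    refine ⟨by omega, by omega, ?_⟩
    rw [he]
    have : m - 1 + 1 = m := by omega
    rw [this]
    exact hm.2

/-- `val P v` is the strict minimum on the window `[leftEnd, rightEnd]`. -/
lemma window_min (hP : P.Nodup) (hv : 1 ≤ v ∧ v ≤ P.length) {j : ℕ}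
    (h1 : leftEnd P v ≤ j) (h2 : j ≤ rightEnd P v) (hne : j ≠ v) :
    val P v < val P j := by
  have hj1 : 1 ≤ j := le_trans leftEnd_pos h1
  have hj2 : j ≤ P.length := le_trans h2 rightEnd_le
  have hne' : val P j ≠ val P v := fun h => hne (val_inj hP ⟨hj1, hj2⟩ hv h)
  rcases lt_or_gt_of_ne (show j ≠ v from hne) with hlt | hgt
  · rcases lt_or_gt_of_ne hne' with h | h
    · exact absurd h (leftEnd_min h1 (by omega))
    · exact h
  · rcases lt_or_gt_of_ne hne' with h | h
    · exact absurd h (rightEnd_min (by omega) h2)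
    · exact h

/-- Characterization: an interval with the window properties is `[leftEnd, rightEnd]`. -/
lemma ends_eq (hP : P.Nodup) (hv : 1 ≤ v ∧ v ≤ P.length) {a b : ℕ}
    (ha1 : 1 ≤ a) (hav : a ≤ v) (hvb : v ≤ b) (hb : b ≤ P.length)
    (hmin : ∀ j, a ≤ j → j ≤ b → j ≠ v → val P v < val P j)
    (hla : a = 1 ∨ val P (a - 1) < val P v)
    (hrb : b = P.length ∨ val P (b + 1) < val P v) :
    leftEnd P v = a ∧ rightEnd P v = b := by
  constructor
  · by_contra hne
    rcases lt_or_gt_of_ne hne with hlt | hgt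
    · -- leftEnd < a : then a - 1 is in the window, but val P (a-1) < val P v
      rcases hla with rfl | hla
      · have := leftEnd_pos (P := P) (v := v); omega
      · exact leftEnd_min (by omega) (by omega) hla
    · -- leftEnd > a : then leftEnd - 1 ≥ a is in [a, v-1], boundary gives contradiction
      rcases leftEnd_boundary (P := P) (v := v) with h1 | ⟨h1, h2, h3⟩
      · omega
      · exact absurd h3 (not_lt_of_gt (hmin _ (by omega) (by omega) (by omega)))
  · by_contra hne
    rcases lt_or_gt_of_ne hne with hlt | hgt
    · rcases rightEnd_boundary (P := P) (v := v) with h1 | ⟨h1, h2, h3⟩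
      · omega
      · exact absurd h3 (not_lt_of_gt (hmin _ (by omega) (by omega) (by omega)))
    · rcases hrb with rfl | hrb
      · have := rightEnd_le (P := P) (v := v); omega
      · exact rightEnd_min (by omega) (by omega) hrb

end Ends
section Psub
variable {P : List ℤ} {v : ℕ}

lemma subslice_sublist (P : List ℤ) (a b : ℕ) : (subslice P a b).Sublist P :=
  ((List.take b P).drop_sublist (a-1)).trans (P.take_sublist b)

lemma subslice_nodup (hP : P.Nodup) (a b : ℕ) : (subslice P a b).Nodup :=
  (subslice_sublist P a b).nodup hP

lemma subslice_split {a b : ℕ} (ha : 1 ≤ a) (hav : a ≤ v) (hvb : v ≤ b)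
    (hb : b ≤ P.length) :
    subslice P a b = subslice P a (v - 1) ++ val P v :: subslice P (v + 1) b := by
  rw [subslice_eq_map P a b ha, subslice_eq_map P a (v-1) ha,
    subslice_eq_map P (v+1) b (by omega)]
  have e1 : min b P.length + 1 - a = (b + 1 - v) + (v - a) := by omega
  have e2 : min (v - 1) P.length + 1 - a = v - a := by omega
  have e3 : min b P.length + 1 - (v + 1) = b - v := by omega
  rw [e1, e2, e3]
  have e4 : List.range' a ((b + 1 - v) + (v - a)) =
      List.range' a (v - a) ++ List.range' (a + (v - a)) (b + 1 - v) :=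
    by rw [Nat.add_comm]; exact (List.range'_append_1 (s := a) (m := v - a) (n := b + 1 - v)).symm
  have e5 : a + (v - a) = v := by omega
  have e6 : b + 1 - v = (b - v) + 1 := by omega
  rw [e4, e5, e6, List.range'_succ]
  simp

/-- The 1-based argmin of the subslice `P[a..b]`. -/
lemma argmin_spec (hP : P.Nodup) {a b : ℕ} (ha : 1 ≤ a) (hab : a ≤ b) (hb : b ≤ P.length) :
    a ≤ a + minidx0 (subslice P a b) ∧ a + minidx0 (subslice P a b) ≤ b ∧
      (∀ j, a ≤ j → j ≤ b → j ≠ a + minidx0 (subslice P a b) →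
        val P (a + minidx0 (subslice P a b)) < val P j) := by
  have hslen : (subslice P a b).length = b + 1 - a := length_subslice P a b ha hb
  have hne : subslice P a b ≠ [] := by
    intro h; rw [h] at hslen; simp at hslen; omega
  have hlt := minidx0_lt_length hne
  have h2 : (subslice P a b)[minidx0 (subslice P a b)]'hlt =
      val P (a + minidx0 (subslice P a b)) := subslice_getElem ha hb (by omega)
  have h1 : (subslice P a b)[minidx0 (subslice P a b)]'hlt = minval (subslice P a b) :=
    List.getElem_idxOf (List.idxOf_lt_length_iff.mpr (minval_mem hne))
  have hval : val P (a + minidx0 (subslice P a b)) = minval (subslice P a b) :=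
    h2.symm.trans h1
  refine ⟨by omega, by omega, ?_⟩
  intro j hj1 hj2 hj3
  have hjmem : val P j ∈ subslice P a b := (mem_subslice ha hb).mpr ⟨j, hj1, hj2, rfl⟩
  have hle : minval (subslice P a b) ≤ val P j := minval_le hjmem
  have hne' : val P (a + minidx0 (subslice P a b)) ≠ val P j :=
    fun h => hj3 (val_inj hP ⟨by omega, by omega⟩ ⟨by omega, by omega⟩ h).symm
  rw [hval] at hne' ⊢
  omega

lemma Psub_decomp (hP : P.Nodup) (hv : 1 ≤ v ∧ v ≤ P.length) :
    Psub P v = subslice P (leftEnd P v) (v - 1) ++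
      val P v :: subslice P (v + 1) (rightEnd P v) :=
  subslice_split leftEnd_pos (leftEnd_le hv.1) (le_rightEnd hv.2) rightEnd_le

lemma mem_left_lt (hP : P.Nodup) (hv : 1 ≤ v ∧ v ≤ P.length) :
    ∀ y ∈ subslice P (leftEnd P v) (v - 1), val P v < y := by
  intro y hy
  obtain ⟨j, hj1, hj2, rfl⟩ := (mem_subslice leftEnd_pos (by omega)).mp hy
  exact window_min hP hv hj1 (by have := le_rightEnd hv.2; omega) (by omega)

lemma mem_right_lt (hP : P.Nodup) (hv : 1 ≤ v ∧ v ≤ P.length) :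
    ∀ y ∈ subslice P (v + 1) (rightEnd P v), val P v < y := by
  intro y hy
  obtain ⟨j, hj1, hj2, rfl⟩ := (mem_subslice (by omega) rightEnd_le).mp hy
  exact window_min hP hv (by have := leftEnd_le (P := P) hv.1; omega) hj2 (by omega)

lemma minidx0_Psub (hP : P.Nodup) (hv : 1 ≤ v ∧ v ≤ P.length) :
    minidx0 (Psub P v) = v - leftEnd P v := by
  rw [Psub_decomp hP hv, minidx0_append (mem_left_lt hP hv) (mem_right_lt hP hv),
    length_subslice P _ _ leftEnd_pos (by omega)]
  have := leftEnd_le (P := P) hv.1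
  have := leftEnd_pos (P := P) (v := v)
  omega

lemma CT_Psub (hP : P.Nodup) (hv : 1 ≤ v ∧ v ≤ P.length) :
    CT (Psub P v) = .node (CT (subslice P (leftEnd P v) (v - 1)))
      (CT (subslice P (v + 1) (rightEnd P v))) := by
  rw [Psub_decomp hP hv]
  exact CT_append (mem_left_lt hP hv) (mem_right_lt hP hv)

lemma Psub_length (hv : 1 ≤ v ∧ v ≤ P.length) :
    (Psub P v).length = rightEnd P v + 1 - leftEnd P v :=
  length_subslice P _ _ leftEnd_pos rightEnd_le

/-- Facts about the left child. -/
lemma leftChild_spec (hP : P.Nodup) (hv : 1 ≤ v ∧ v ≤ P.length) {u : ℕ}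
    (h : leftChild P v = some u) :
    leftEnd P v ≤ u ∧ u ≤ v - 1 ∧ leftEnd P u = leftEnd P v ∧ rightEnd P u = v - 1 ∧
      Psub P u = subslice P (leftEnd P v) (v - 1) ∧ val P v < val P u := by
  rw [leftChild] at h
  split_ifs at h with hlt
  have hu : u = leftEnd P v + minidx0 (subslice P (leftEnd P v) (v - 1)) :=
    (Option.some_injective _ h).symm
  obtain ⟨h1, h2, h3⟩ := argmin_spec hP (a := leftEnd P v) (b := v - 1)
    leftEnd_pos (by omega) (by omega)
  rw [← hu] at h1 h2 h3
  have hvu : val P v < val P u :=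
    window_min hP hv h1 (by have := le_rightEnd hv.2; omega) (by omega)
  have hu1 : 1 ≤ u := le_trans leftEnd_pos h1
  have hends : leftEnd P u = leftEnd P v ∧ rightEnd P u = v - 1 := by
    apply ends_eq hP ⟨hu1, by omega⟩ leftEnd_pos h1 h2 (by omega)
    · intro j hj1 hj2 hj3
      exact h3 j hj1 hj2 hj3
    · rcases leftEnd_boundary (P := P) (v := v) with hb | ⟨hb1, hb2, hb3⟩
      · left; exact hb
      · right; exact lt_trans hb3 hvu
    · right
      have : v - 1 + 1 = v := by omega
      rw [this]
      exact hvu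
  exact ⟨h1, h2, hends.1, hends.2, by rw [Psub, hends.1, hends.2], hvu⟩

/-- If `v` has no left child then `leftEnd P v = v`. -/
lemma leftChild_none (hv : 1 ≤ v) (h : leftChild P v = none) : leftEnd P v = v := by
  rw [leftChild] at h
  split_ifs at h with hlt
  have := leftEnd_le (P := P) hv
  omega

end Psub
section Witness
variable {T P : List ℤ} {v i : ℕ}

lemma seqAt_append (T : List ℤ) (I₁ I₂ : List ℕ) (i : ℕ) :
    seqAt T (I₁ ++ i :: I₂) = seqAt T I₁ ++ val T i :: seqAt T I₂ := by
  simp [seqAt]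

lemma seqAt_nodup (hT : T.Nodup) {I : List ℕ} (hs : I.Pairwise (· < ·))
    (hb : ∀ j ∈ I, 1 ≤ j ∧ j ≤ T.length) : (seqAt T I).Nodup := by
  apply List.Nodup.map_on _ hs.nodup
  intro x hx y hy hxy
  exact val_inj hT (hb x hx) (hb y hy) hxy

lemma mem_seqAt {I : List ℕ} {j : ℕ} (hj : j ∈ I) : val T j ∈ seqAt T I :=
  List.mem_map_of_mem hj

/-- In a witness, the pivot value is strictly below all other values. -/
lemma pivot_strict_min (hT : T.Nodup) {I : List ℕ}
    (hb : ∀ j ∈ I, 1 ≤ j ∧ j ≤ T.length) (hiI : i ∈ I)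
    (hmin : val T i = minval (seqAt T I)) {j : ℕ} (hj : j ∈ I) (hne : j ≠ i) :
    val T i < val T j := by
  have h1 : minval (seqAt T I) ≤ val T j := minval_le (mem_seqAt hj)
  have h2 : val T i ≠ val T j := fun h => hne (val_inj hT (hb j hj) (hb i hiI) h.symm)
  rw [hmin]
  omega

/-- Splitting a witness at its pivot. -/
lemma witness_split (hT : T.Nodup) {I : List ℕ} (hs : I.Pairwise (· < ·))
    (hb : ∀ j ∈ I, 1 ≤ j ∧ j ≤ T.length) (hiI : i ∈ I)
    (hmin : val T i = minval (seqAt T I)) :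
    minidx0 (seqAt T I) = I.idxOf i ∧
      I = I.take (I.idxOf i) ++ i :: I.drop (I.idxOf i + 1) ∧
      (∀ j ∈ I.take (I.idxOf i), j < i) ∧
      (∀ j ∈ I.drop (I.idxOf i + 1), i < j) := by
  have hq : I.idxOf i < I.length := List.idxOf_lt_length_iff.mpr hiI
  have hIq : I[I.idxOf i]'hq = i := List.getElem_idxOf hq
  have hnd : (seqAt T I).Nodup := seqAt_nodup hT hs hb
  have hlen : (seqAt T I).length = I.length := List.length_map _
  have hgetm : (seqAt T I)[I.idxOf i]'(by omega) = val T i := by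
    simp only [seqAt, List.getElem_map]
    rw [hIq]
  have h0 : minidx0 (seqAt T I) = I.idxOf i :=
    minidx0_eq hnd (by omega) (by rw [hgetm, hmin])
  have hsort := List.pairwise_iff_getElem.mp hs
  refine ⟨h0, ?_, ?_, ?_⟩
  · conv_lhs => rw [← List.take_append_drop (I.idxOf i) I]
    rw [List.drop_eq_getElem_cons hq, hIq]
  · intro j hj
    obtain ⟨k, hk, rfl⟩ := List.mem_iff_getElem.mp hj
    rw [List.length_take] at hk
    rw [List.getElem_take]
    have := hsort k (I.idxOf i) (by omega) (by omega) (by omega)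
    rwa [hIq] at this
  · intro j hj
    obtain ⟨k, hk, rfl⟩ := List.mem_iff_getElem.mp hj
    rw [List.length_drop] at hk
    rw [List.getElem_drop]
    have := hsort (I.idxOf i) (I.idxOf i + 1 + k) (by omega) (by omega) (by omega)
    rwa [hIq] at this

/-- Splitting a witness of a fixed-interval at its pivot: structured version. -/
lemma witness_split_CT (hT : T.Nodup) (hP : P.Nodup) (hv : 1 ≤ v ∧ v ≤ P.length)
    {I : List ℕ} (hs : I.Pairwise (· < ·))
    (hb : ∀ j ∈ I, 1 ≤ j ∧ j ≤ T.length) (hiI : i ∈ I)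
    (hlen : I.length = (Psub P v).length)
    (hCT : CT (seqAt T I) = CT (Psub P v))
    (hmin : val T i = minval (seqAt T I)) :
    I.idxOf i = v - leftEnd P v ∧
      I = I.take (v - leftEnd P v) ++ i :: I.drop (v - leftEnd P v + 1) ∧
      (∀ j ∈ I.take (v - leftEnd P v), j < i) ∧
      (∀ j ∈ I.drop (v - leftEnd P v + 1), i < j) ∧
      CT (seqAt T (I.take (v - leftEnd P v))) = CT (subslice P (leftEnd P v) (v - 1)) ∧
      CT (seqAt T (I.drop (v - leftEnd P v + 1))) =
        CT (subslice P (v + 1) (rightEnd P v)) := by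
  obtain ⟨h0, hsplit, hlt, hgt⟩ := witness_split hT hs hb hiI hmin
  have hq : I.idxOf i < I.length := List.idxOf_lt_length_iff.mpr hiI
  have hslen : (seqAt T I).length = I.length := List.length_map _
  have hPne : Psub P v ≠ [] := by
    intro h
    have hl := Psub_length (P := P) hv
    have h1 := leftEnd_le (P := P) hv.1
    have h2 := le_rightEnd (P := P) hv.2
    rw [h] at hl
    simp at hl
    omega
  have hIne : seqAt T I ≠ [] := by
    intro h
    apply hPne
    have : (seqAt T I).length = 0 := by rw [h]; rfl
    rw [hslen, hlen] at this
    exact List.eq_nil_of_length_eq_zero this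
  rw [CT_cons _ hIne, CT_cons _ hPne, minidx0_Psub hP hv, h0] at hCT
  injection hCT with hCTL hCTR
  -- show the two indices agree using sizes of the left subtrees
  have hql : ((seqAt T I).take (I.idxOf i)).length = I.idxOf i := by
    rw [List.length_take]; omega
  have hpl : ((Psub P v).take (v - leftEnd P v)).length = v - leftEnd P v := by
    rw [List.length_take, Psub_length hv]
    have h1 := leftEnd_le (P := P) hv.1
    have h2 := le_rightEnd (P := P) hv.2
    have h3 := leftEnd_pos (P := P) (v := v)
    omega
  have heq : I.idxOf i = v - leftEnd P v := by
    have := length_eq_of_CT_eq hCTL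
    rw [hql, hpl] at this
    exact this
  rw [heq] at h0 hsplit hlt hgt hCTL hCTR
  have htake : seqAt T (I.take (v - leftEnd P v)) = (seqAt T I).take (v - leftEnd P v) := by
    simp [seqAt]
  have hdrop : seqAt T (I.drop (v - leftEnd P v + 1)) =
      (seqAt T I).drop (v - leftEnd P v + 1) := by
    simp [seqAt]
  have hsublen : (subslice P (leftEnd P v) (v - 1)).length = v - leftEnd P v := by
    rw [length_subslice P _ _ leftEnd_pos (by omega)]
    have := hv.1
    omega
  have hPtake : (Psub P v).take (v - leftEnd P v) = subslice P (leftEnd P v) (v - 1) := by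
    rw [Psub_decomp hP hv]
    rw [List.take_append_of_le_length (by rw [hsublen])]
    exact List.take_of_length_le (by rw [hsublen])
  have hPdrop : (Psub P v).drop (v - leftEnd P v + 1) =
      subslice P (v + 1) (rightEnd P v) := by
    rw [Psub_decomp hP hv]
    have e : subslice P (leftEnd P v) (v - 1) ++ val P v ::
        subslice P (v + 1) (rightEnd P v) =
        (subslice P (leftEnd P v) (v - 1) ++ [val P v]) ++
          subslice P (v + 1) (rightEnd P v) := by simp
    rw [e]
    apply List.drop_left'
    rw [List.length_append, hsublen]
    simp
  refine ⟨heq, hsplit, hlt, hgt, ?_, ?_⟩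
  · rw [htake, ← hPtake]; exact hCTL
  · rw [hdrop, ← hPdrop]; exact hCTR

/-- Joining two halves into a witness. -/
lemma witness_join (hT : T.Nodup) (hP : P.Nodup) (hv : 1 ≤ v ∧ v ≤ P.length)
    (hi : 1 ≤ i ∧ i ≤ T.length)
    {I₁ I₂ : List ℕ} (hs1 : I₁.Pairwise (· < ·)) (hs2 : I₂.Pairwise (· < ·))
    (hb1 : ∀ j ∈ I₁, 1 ≤ j ∧ j ≤ T.length) (hb2 : ∀ j ∈ I₂, 1 ≤ j ∧ j ≤ T.length)
    (hlt1 : ∀ j ∈ I₁, j < i) (hgt2 : ∀ j ∈ I₂, i < j)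
    (hv1 : ∀ y ∈ seqAt T I₁, val T i < y) (hv2 : ∀ y ∈ seqAt T I₂, val T i < y)
    (hCT1 : CT (seqAt T I₁) = CT (subslice P (leftEnd P v) (v - 1)))
    (hCT2 : CT (seqAt T I₂) = CT (subslice P (v + 1) (rightEnd P v))) :
    IsSubSeq T.length (Psub P v).length (I₁ ++ i :: I₂) ∧ i ∈ I₁ ++ i :: I₂ ∧
      CT (seqAt T (I₁ ++ i :: I₂)) = CT (Psub P v) ∧
      val T i = minval (seqAt T (I₁ ++ i :: I₂)) := by
  have hl1 : I₁.length = (subslice P (leftEnd P v) (v - 1)).length := by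
    have := length_eq_of_CT_eq hCT1
    rwa [seqAt, List.length_map] at this
  have hl2 : I₂.length = (subslice P (v + 1) (rightEnd P v)).length := by
    have := length_eq_of_CT_eq hCT2
    rwa [seqAt, List.length_map] at this
  refine ⟨⟨?_, ?_, ?_⟩, by simp, ?_, ?_⟩
  · rw [Psub_decomp hP hv]
    simp only [List.length_append, List.length_cons, hl1, hl2]
  · rw [List.pairwise_append]
    refine ⟨hs1, ?_, ?_⟩
    · rw [List.pairwise_cons]
      exact ⟨fun j hj => hgt2 j hj, hs2⟩
    · intro a ha b hb
      rcases List.mem_cons.mp hb with rfl | hb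
      · exact hlt1 a ha
      · exact lt_trans (hlt1 a ha) (hgt2 b hb)
  · intro j hj
    rcases List.mem_append.mp hj with hj | hj
    · exact hb1 j hj
    · rcases List.mem_cons.mp hj with rfl | hj
      · exact hi
      · exact hb2 j hj
  · rw [seqAt_append, CT_append hv1 hv2, CT_Psub hP hv, hCT1, hCT2]
  · rw [seqAt_append]
    symm
    apply minval_eq_of_le (by simp)
    intro y hy
    rcases List.mem_append.mp hy with hy | hy
    · exact (hv1 y hy).le
    · rcases List.mem_cons.mp hy with rfl | hy
      · exact le_rfl
      · exact (hv2 y hy).le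

end Witness
section Fixed
variable {T P : List ℤ} {v i : ℕ}

lemma fixed_bounds {ℓ r : ℕ} (h : IsFixedInterval T P v i ℓ r) :
    1 ≤ ℓ ∧ r ≤ T.length ∧ ℓ ≤ i ∧ i ≤ r := by
  obtain ⟨h1, h2, I, hsub, hiI, hrange, _, _⟩ := h
  exact ⟨h1, h2, (hrange i hiI).1, (hrange i hiI).2⟩

/-- Mixing: the left half of one fixed-interval witness with the right half of another. -/
lemma fixed_mix (hT : T.Nodup) (hP : P.Nodup) (hv : 1 ≤ v ∧ v ≤ P.length)
    {ℓ₁ r₁ ℓ₂ r₂ : ℕ}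
    (h₁ : IsFixedInterval T P v i ℓ₁ r₁) (h₂ : IsFixedInterval T P v i ℓ₂ r₂) :
    IsFixedInterval T P v i ℓ₁ r₂ := by
  have hb₁ := fixed_bounds h₁
  have hb₂ := fixed_bounds h₂
  obtain ⟨hl1, hr1, I₁, ⟨hlen₁, hs₁, hb1⟩, hiI₁, hrange₁, hCT₁, hmin₁⟩ := h₁
  obtain ⟨hl2, hr2, I₂, ⟨hlen₂, hs₂, hb2⟩, hiI₂, hrange₂, hCT₂, hmin₂⟩ := h₂
  obtain ⟨_, _, hlt₁, _, hCTL₁, _⟩ :=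
    witness_split_CT hT hP hv hs₁ hb1 hiI₁ hlen₁ hCT₁ hmin₁
  obtain ⟨_, _, _, hgt₂, _, hCTR₂⟩ :=
    witness_split_CT hT hP hv hs₂ hb2 hiI₂ hlen₂ hCT₂ hmin₂
  set p := v - leftEnd P v with hp
  have hsub_take : (I₁.take p).Sublist I₁ := List.take_sublist _ _
  have hsub_drop : (I₂.drop (p + 1)).Sublist I₂ := List.drop_sublist _ _
  obtain ⟨hsub', hiJ, hCT', hmin'⟩ :=
    witness_join hT hP hv ⟨(hb1 i hiI₁).1, (hb1 i hiI₁).2⟩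
      (hs₁.sublist hsub_take) (hs₂.sublist hsub_drop)
      (fun j hj => hb1 j (hsub_take.mem hj)) (fun j hj => hb2 j (hsub_drop.mem hj))
      hlt₁ hgt₂
      (by
        intro y hy
        obtain ⟨j, hj, rfl⟩ := List.mem_map.mp hy
        exact pivot_strict_min hT hb1 hiI₁ hmin₁ (hsub_take.mem hj)
          (by have := hlt₁ j hj; omega))
      (by
        intro y hy
        obtain ⟨j, hj, rfl⟩ := List.mem_map.mp hy
        exact pivot_strict_min hT hb2 hiI₂ hmin₂ (hsub_drop.mem hj)
          (by have := hgt₂ j hj; omega))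
      hCTL₁ hCTR₂
  refine ⟨hl1, hr2, I₁.take p ++ i :: I₂.drop (p + 1), hsub', hiJ, ?_, hCT', hmin'⟩
  intro j hj
  rcases List.mem_append.mp hj with hj | hj
  · have h1 := (hrange₁ j (hsub_take.mem hj)).1
    have h2 := hlt₁ j hj
    omega
  · rcases List.mem_cons.mp hj with rfl | hj
    · omega
    · have h1 := (hrange₂ j (hsub_drop.mem hj)).2
      have h2 := hgt₂ j hj
      omega

/-- The intersection of two fixed intervals with the same pivot is a fixed interval. -/
lemma fixed_inter (hT : T.Nodup) (hP : P.Nodup) (hv : 1 ≤ v ∧ v ≤ P.length)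
    {ℓ₁ r₁ ℓ₂ r₂ : ℕ}
    (h₁ : IsFixedInterval T P v i ℓ₁ r₁) (h₂ : IsFixedInterval T P v i ℓ₂ r₂) :
    IsFixedInterval T P v i (max ℓ₁ ℓ₂) (min r₁ r₂) := by
  rcases le_total ℓ₁ ℓ₂ with hl | hl <;> rcases le_total r₁ r₂ with hr | hr
  · rw [max_eq_right hl, min_eq_left hr]; exact fixed_mix hT hP hv h₂ h₁
  · rw [max_eq_right hl, min_eq_right hr]; exact h₂
  · rw [max_eq_left hl, min_eq_left hr]; exact h₁
  · rw [max_eq_left hl, min_eq_right hr]; exact fixed_mix hT hP hv h₁ h₂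

/-- Every fixed interval contains a minimal one. -/
lemma exists_min_fixed {ℓ r : ℕ} (h : IsFixedInterval T P v i ℓ r) :
    ∃ ℓ' r', IsMinFixedInterval T P v i ℓ' r' := by
  have hne : ∃ d, ∃ ℓ' r', IsFixedInterval T P v i ℓ' r' ∧ r' - ℓ' = d :=
    ⟨r - ℓ, ℓ, r, h, rfl⟩
  classical
  obtain ⟨ℓ₀, r₀, h₀, hd₀⟩ := Nat.find_spec hne
  refine ⟨ℓ₀, r₀, h₀, ?_⟩
  rintro ⟨ℓ', r', hf', hss⟩
  obtain ⟨hss1, hss2, hss3⟩ := hss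
  simp only at hss1 hss2
  have hb' := fixed_bounds hf'
  have hb₀ := fixed_bounds h₀
  have hlt : r' - ℓ' < Nat.find hne := by
    rw [← hd₀]
    have : (ℓ', r') ≠ (ℓ₀, r₀) := hss3
    have hne2 : ℓ' ≠ ℓ₀ ∨ r' ≠ r₀ := by
      by_contra hc
      push_neg at hc
      exact this (by rw [hc.1, hc.2])
    omega
  exact Nat.find_min hne hlt ⟨ℓ', r', hf', rfl⟩

/-- A minimal fixed interval is contained in every fixed interval with the same pivot. -/
lemma min_fixed_subset (hT : T.Nodup) (hP : P.Nodup) (hv : 1 ≤ v ∧ v ≤ P.length)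
    {ℓ r ℓ' r' : ℕ} (hmin : IsMinFixedInterval T P v i ℓ r)
    (hfix : IsFixedInterval T P v i ℓ' r') : ℓ' ≤ ℓ ∧ r ≤ r' := by
  have hint := fixed_inter hT hP hv hmin.1 hfix
  have hb := fixed_bounds hmin.1
  have hb' := fixed_bounds hfix
  by_contra hc
  apply hmin.2
  refine ⟨max ℓ ℓ', min r r', hint, le_max_left _ _, min_le_left _ _, ?_⟩
  intro hcon
  have h1 : max ℓ ℓ' = ℓ := congrArg Prod.fst hcon
  have h2 : min r r' = r := congrArg Prod.snd hcon
  apply hc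
  constructor
  · omega
  · omega

/-- Minimal fixed intervals are unique, so `mfiL`/`mfiR` compute them. -/
lemma mfi_eq (hT : T.Nodup) (hP : P.Nodup) (hv : 1 ≤ v ∧ v ≤ P.length)
    {ℓ r : ℕ} (hmin : IsMinFixedInterval T P v i ℓ r) :
    mfiL T P v i = (ℓ : WithBot ℕ) ∧ mfiR T P v i = (r : WithTop ℕ) := by
  have h : ∃ ℓ r, IsMinFixedInterval T P v i ℓ r := ⟨ℓ, r, hmin⟩
  have hspec : IsMinFixedInterval T P v i h.choose h.choose_spec.choose :=
    h.choose_spec.choose_spec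
  have h1 := min_fixed_subset hT hP hv hmin hspec.1
  have h2 := min_fixed_subset hT hP hv hspec hmin.1
  have hℓ : h.choose = ℓ := by omega
  have hr : h.choose_spec.choose = r := by omega
  rw [mfiL, mfiR, dif_pos h, dif_pos h]
  exact ⟨congrArg _ hℓ, congrArg _ hr⟩

end Fixed
open Classical in
/-- The recurrence for `L(v, i)`, the left endpoint of the minimal
fixed-interval with pivot `(v, i)`:
`L(v,i) = -∞` if `mfi(v,i) = [-∞,∞]`; `L(v,i) = i` if `mfi(v,i) ≠ [-∞,∞]` and `v` has no
left child in `CT(P)`; and otherwise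
`L(v,i) = max { L(v.L, j) : 1 ≤ j ≤ i-1, T[i] < T[j], R(v.L, j) < i }`. -/
theorem L_recurrence
    (T P : List ℤ) (hT : T.Nodup) (hP : P.Nodup)
    (hm : 1 ≤ P.length) (hmn : P.length ≤ T.length)
    (v i : ℕ) (hv : 1 ≤ v ∧ v ≤ P.length) (hi : 1 ≤ i ∧ i ≤ T.length)
    :
    (¬(∃ ℓ r, IsMinFixedInterval T P v i ℓ r) → mfiL T P v i = ⊥) ∧
    ((∃ ℓ r, IsMinFixedInterval T P v i ℓ r) → leftChild P v = none →
      mfiL T P v i = (i : WithBot ℕ)) ∧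
    (∀ u, (∃ ℓ r, IsMinFixedInterval T P v i ℓ r) → leftChild P v = some u →
      mfiL T P v i =
        ((Finset.Icc 1 (i - 1)).filter
          (fun j => val T i < val T j ∧ mfiR T P u j < (i : WithTop ℕ))).sup
          (fun j => mfiL T P u j)) := by
  refine ⟨fun h => by rw [mfiL, dif_neg h], ?_, ?_⟩
  · -- Part 2: no left child
    rintro ⟨ℓ, r, hmin⟩ hnone
    have hb := fixed_bounds hmin.1
    have hℓi : ℓ = i := by
      by_contra hne
      obtain ⟨hl1, hr1, I, ⟨hlen, hs, hbI⟩, hiI, hrange, hCT, hminv⟩ := hmin.1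
      obtain ⟨heq, hsplit, hlt, hgt, _, _⟩ :=
        witness_split_CT hT hP hv hs hbI hiI hlen hCT hminv
      have hp0 : v - leftEnd P v = 0 := by rw [leftChild_none hv.1 hnone]; omega
      rw [hp0] at hsplit hgt
      have hgei : ∀ j ∈ I, i ≤ j := by
        intro j hj
        rw [hsplit] at hj
        simp only [List.take_zero, List.nil_append, List.mem_cons] at hj
        rcases hj with rfl | hj
        · exact le_rfl
        · exact (hgt j hj).le
      have hfix : IsFixedInterval T P v i i r :=
        ⟨hi.1, hr1, I, ⟨hlen, hs, hbI⟩, hiI,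
          fun j hj => ⟨hgei j hj, (hrange j hj).2⟩, hCT, hminv⟩
      exact hmin.2 ⟨i, r, hfix, hb.2.2.1, le_rfl, fun hc => hne
        (congrArg Prod.fst hc).symm⟩
    rw [(mfi_eq hT hP hv hmin).1, hℓi]
  · -- Part 3: left child u
    rintro u ⟨ℓ, r, hmin⟩ hsome
    obtain ⟨hau, huv, hLu, hRu, hPsubu, hvu⟩ := leftChild_spec hP hv hsome
    have hu : 1 ≤ u ∧ u ≤ P.length := ⟨le_trans leftEnd_pos hau, by omega⟩
    have hb := fixed_bounds hmin.1
    rw [(mfi_eq hT hP hv hmin).1]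
    apply le_antisymm
    · -- ℓ ≤ sup : produce a good j from the witness of mfi(v,i)
      obtain ⟨hl1, hr1, I, ⟨hlen, hs, hbI⟩, hiI, hrange, hCT, hminv⟩ := hmin.1
      obtain ⟨heq, hsplit, hlt, hgt, hCTL, hCTR⟩ :=
        witness_split_CT hT hP hv hs hbI hiI hlen hCT hminv
      set p := v - leftEnd P v with hp
      have hppos : 1 ≤ p := by
        have := leftEnd_pos (P := P) (v := v)
        omega
      have hItlen : (I.take p).length = p := by
        rw [List.length_take]
        have hq : I.idxOf i < I.length := List.idxOf_lt_length_iff.mpr hiI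
        omega
      have hILne : I.take p ≠ [] := by
        intro h
        rw [h] at hItlen
        simp at hItlen
        omega
      have hseqne : seqAt T (I.take p) ≠ [] := by
        intro h
        apply hILne
        have : (seqAt T (I.take p)).length = 0 := by rw [h]; rfl
        rw [seqAt, List.length_map] at this
        exact List.eq_nil_of_length_eq_zero this
      obtain ⟨j, hjIL, hjval⟩ := List.mem_map.mp (minval_mem hseqne)
      have hsubIL : (I.take p).Sublist I := List.take_sublist _ _
      have hjI : j ∈ I := hsubIL.mem hjIL
      have hji : j < i := hlt j hjIL
      have hjb := hbI j hjI
      -- the fixed interval [ℓ, i-1] for pivot (u, j)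
      have hfixj : IsFixedInterval T P u j ℓ (i - 1) := by
        refine ⟨hl1, by omega, I.take p, ⟨?_, hs.sublist hsubIL,
          fun k hk => hbI k (hsubIL.mem hk)⟩, hjIL, ?_, ?_, (show val T j = minval (seqAt T (I.take p)) from hjval)⟩
        · have := length_eq_of_CT_eq hCTL
          rw [seqAt, List.length_map] at this
          rw [this, hPsubu]
        · intro k hk
          have h1 := (hrange k (hsubIL.mem hk)).1
          have h2 := hlt k hk
          omega
        · rw [hCTL, hPsubu]
      obtain ⟨lj, rj, hminj⟩ := exists_min_fixed hfixj
      have hsubj := min_fixed_subset hT hP hu hminj hfixj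
      have hmfij := mfi_eq hT hP hu hminj
      have hjS : j ∈ (Finset.Icc 1 (i - 1)).filter
          (fun j => val T i < val T j ∧ mfiR T P u j < (i : WithTop ℕ)) := by
        simp only [Finset.mem_filter, Finset.mem_Icc]
        refine ⟨⟨hjb.1, by omega⟩, ?_, ?_⟩
        · exact pivot_strict_min hT hbI hiI hminv hjI (by omega)
        · rw [hmfij.2]
          exact_mod_cast (by omega : rj < i)
      calc (ℓ : WithBot ℕ) ≤ (lj : WithBot ℕ) := by exact_mod_cast hsubj.1
        _ = mfiL T P u j := hmfij.1.symm
        _ ≤ _ := Finset.le_sup hjS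
    · -- sup ≤ ℓ
      apply Finset.sup_le
      intro j hjS
      simp only [Finset.mem_filter, Finset.mem_Icc] at hjS
      obtain ⟨⟨hj1, hj2⟩, hvij, hRj⟩ := hjS
      by_cases hex : ∃ ℓ' r', IsMinFixedInterval T P u j ℓ' r'
      · obtain ⟨lj, rj, hminj⟩ := hex
        have hmfij := mfi_eq hT hP hu hminj
        rw [hmfij.1]
        rw [hmfij.2] at hRj
        have hrji : rj < i := by exact_mod_cast hRj
        -- build a fixed interval [lj, r] for pivot (v, i)
        obtain ⟨hlj1, hrj1, J, ⟨hlenJ, hsJ, hbJ⟩, hjJ, hrangeJ, hCTJ, hminvJ⟩ := hminj.1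
        obtain ⟨hl1, hr1, I, ⟨hlen, hs, hbI⟩, hiI, hrange, hCT, hminv⟩ := hmin.1
        obtain ⟨heq, hsplit, hlt, hgt, hCTL, hCTR⟩ :=
          witness_split_CT hT hP hv hs hbI hiI hlen hCT hminv
        set p := v - leftEnd P v with hp
        have hsubdrop : (I.drop (p + 1)).Sublist I := List.drop_sublist _ _
        have hJlt : ∀ k ∈ J, k < i := by
          intro k hk
          have := (hrangeJ k hk).2
          omega
        obtain ⟨hsub', hiJ', hCT', hmin'⟩ :=
          witness_join hT hP hv hi hsJ (hs.sublist hsubdrop) hbJ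
            (fun k hk => hbI k (hsubdrop.mem hk)) hJlt (hgt)
            (by
              intro y hy
              have hmv : minval (seqAt T J) ≤ y := minval_le hy
              rw [← hminvJ] at hmv
              omega)
            (by
              intro y hy
              obtain ⟨k, hk, rfl⟩ := List.mem_map.mp hy
              exact pivot_strict_min hT hbI hiI hminv (hsubdrop.mem hk)
                (by have := hgt k hk; omega))
            (by rw [hCTJ, hPsubu]) hCTR
        have hfix : IsFixedInterval T P v i lj r := by
          refine ⟨hlj1, hr1, J ++ i :: I.drop (p + 1), hsub', hiJ', ?_, hCT', hmin'⟩
          intro k hk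
          rcases List.mem_append.mp hk with hk | hk
          · have h1 := (hrangeJ k hk).1
            have h2 := (hrangeJ k hk).2
            have h3 := (hrange i hiI).2
            omega
          · rcases List.mem_cons.mp hk with hk' | hk
            · have h1 := (hrangeJ j hjJ).1
              have h5 := (hrangeJ j hjJ).2
              have h3 := (hrange i hiI).2
              omega
            · have h1 := hgt k hk
              have h2 := (hrange k (hsubdrop.mem hk)).2
              have h4 := (hrangeJ j hjJ).1
              have h5 := (hrangeJ j hjJ).2
              omega
        have := min_fixed_subset hT hP hv hmin hfix
        exact_mod_cast this.1
      · rw [mfiL, dif_neg hex]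
        exact bot_le
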